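/- arXiv:2310.19021 — 3 statements merged into one kernel-verified Lean document; each statement's English description precedes it below -/
import Mathlib

section
/- Let V, A_1,…,A_m, c, H, Ric, Θ_p be as in the setting, with n = dim V = 4 and p = 2. Assume Ric(X) ≥ 2(c+H²) for every unit vector X ∈ V, and that for some orthonormal basis e_1, e_2, e_3, e_4 of V equality Θ_2 = 4c holds. Then for every α ∈ {1,…,m}: ⟨A_α e_1, e_1⟩ = ⟨A_α e_2, e_2⟩, ⟨A_α e_1, e_2⟩ = 0, ⟨A_α e_3, e_3⟩ = ⟨A_α e_4, e_4⟩ and ⟨A_α e_3, e_4⟩ = 0; that is, the compression of each A_α to span{e_1,e_2} and to span{e_3,e_4} is a multiple of the identity. (Proposition 2, part (ii)(b).) -/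
open scoped RealInnerProductSpace

set_option maxHeartbeats 1000000

lemma trace_eq_sum' {V : Type*} [NormedAddCommGroup V] [InnerProductSpace ℝ V]
    [FiniteDimensional ℝ V] {n : ℕ} (e : OrthonormalBasis (Fin n) ℝ V) (T : V →ₗ[ℝ] V) :
    LinearMap.trace ℝ V T = ∑ i, ⟪T (e i), e i⟫ := by
  rw [LinearMap.trace_eq_matrix_trace ℝ e.toBasis, Matrix.trace]
  congr 1
  ext i
  rw [Matrix.diag_apply, LinearMap.toMatrix_apply, OrthonormalBasis.coe_toBasis,
    OrthonormalBasis.coe_toBasis_repr_apply, OrthonormalBasis.repr_apply_apply,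
    real_inner_comm]

lemma norm_sq_eq_sum' {V : Type*} [NormedAddCommGroup V] [InnerProductSpace ℝ V]
    {n : ℕ} (e : OrthonormalBasis (Fin n) ℝ V) (v : V) :
    ‖v‖ ^ 2 = ∑ i, ⟪v, e i⟫ ^ 2 := by
  rw [← real_inner_self_eq_norm_sq, ← e.sum_inner_mul_inner v v]
  congr 1; ext i; rw [sq, real_inner_comm (e i) v]

lemma alg_main {m : ℕ} (h : Fin m → Fin 4 → Fin 4 → ℝ) (c H : ℝ)
    (hs : ∀ α, h α 1 0 = h α 0 1 ∧ h α 2 0 = h α 0 2 ∧ h α 3 0 = h α 0 3 ∧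
      h α 2 1 = h α 1 2 ∧ h α 3 1 = h α 1 3 ∧ h α 3 2 = h α 2 3)
    (hH : 16 * H ^ 2 = ∑ α, (h α 0 0 + h α 1 1 + h α 2 2 + h α 3 3) ^ 2)
    (hR : ∀ i : Fin 4,
      3 * c + ((∑ α, (h α 0 0 + h α 1 1 + h α 2 2 + h α 3 3) * h α i i)
        - ∑ α, (h α i 0 ^ 2 + h α i 1 ^ 2 + h α i 2 ^ 2 + h α i 3 ^ 2)) ≥ 2 * (c + H ^ 2))
    (hT : ((2 * ∑ α, h α 0 2 ^ 2 - ∑ α, h α 0 0 * h α 2 2)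
        + (2 * ∑ α, h α 0 3 ^ 2 - ∑ α, h α 0 0 * h α 3 3))
        + ((2 * ∑ α, h α 1 2 ^ 2 - ∑ α, h α 1 1 * h α 2 2)
        + (2 * ∑ α, h α 1 3 ^ 2 - ∑ α, h α 1 1 * h α 3 3)) = 4 * c) :
    ∀ α, h α 0 0 = h α 1 1 ∧ h α 0 1 = 0 ∧ h α 2 2 = h α 3 3 ∧ h α 2 3 = 0 := by
  have E : ∑ α, ((h α 0 0 - h α 1 1) ^ 2 + 4 * h α 0 1 ^ 2
        + (h α 2 2 - h α 3 3) ^ 2 + 4 * h α 2 3 ^ 2)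
      = (∑ α, (h α 0 0 + h α 1 1 + h α 2 2 + h α 3 3) ^ 2)
      - 2 * (((∑ α, (h α 0 0 + h α 1 1 + h α 2 2 + h α 3 3) * h α 0 0)
              - ∑ α, (h α 0 0 ^ 2 + h α 0 1 ^ 2 + h α 0 2 ^ 2 + h α 0 3 ^ 2))
           + ((∑ α, (h α 0 0 + h α 1 1 + h α 2 2 + h α 3 3) * h α 1 1)
              - ∑ α, (h α 1 0 ^ 2 + h α 1 1 ^ 2 + h α 1 2 ^ 2 + h α 1 3 ^ 2))
           + ((∑ α, (h α 0 0 + h α 1 1 + h α 2 2 + h α 3 3) * h α 2 2)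
              - ∑ α, (h α 2 0 ^ 2 + h α 2 1 ^ 2 + h α 2 2 ^ 2 + h α 2 3 ^ 2))
           + ((∑ α, (h α 0 0 + h α 1 1 + h α 2 2 + h α 3 3) * h α 3 3)
              - ∑ α, (h α 3 0 ^ 2 + h α 3 1 ^ 2 + h α 3 2 ^ 2 + h α 3 3 ^ 2)))
      - 2 * (((2 * ∑ α, h α 0 2 ^ 2 - ∑ α, h α 0 0 * h α 2 2)
            + (2 * ∑ α, h α 0 3 ^ 2 - ∑ α, h α 0 0 * h α 3 3))
           + ((2 * ∑ α, h α 1 2 ^ 2 - ∑ α, h α 1 1 * h α 2 2)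
            + (2 * ∑ α, h α 1 3 ^ 2 - ∑ α, h α 1 1 * h α 3 3))) := by
    simp only [Finset.mul_sum, ← Finset.sum_add_distrib, ← Finset.sum_sub_distrib]
    refine Finset.sum_congr rfl fun α _ => ?_
    obtain ⟨s1, s2, s3, s4, s5, s6⟩ := hs α
    rw [s1, s2, s3, s4, s5, s6]; ring
  have hnn : ∀ β ∈ Finset.univ, (0:ℝ) ≤ (h β 0 0 - h β 1 1) ^ 2 + 4 * h β 0 1 ^ 2
      + (h β 2 2 - h β 3 3) ^ 2 + 4 * h β 2 3 ^ 2 := fun β _ => by positivity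
  have key : ∑ α, ((h α 0 0 - h α 1 1) ^ 2 + 4 * h α 0 1 ^ 2
      + (h α 2 2 - h α 3 3) ^ 2 + 4 * h α 2 3 ^ 2) ≤ 0 := by
    have h0 := hR 0; have h1 := hR 1; have h2 := hR 2; have h3 := hR 3
    rw [E]; linarith
  have hzero := (Finset.sum_eq_zero_iff_of_nonneg hnn).mp
    (le_antisymm key (Finset.sum_nonneg hnn))
  intro α
  have hα := hzero α (Finset.mem_univ α)
  have q1 : (h α 0 0 - h α 1 1) ^ 2 = 0 := by nlinarith [sq_nonneg (h α 0 1), sq_nonneg (h α 2 2 - h α 3 3), sq_nonneg (h α 2 3)]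
  have q2 : h α 0 1 ^ 2 = 0 := by nlinarith [sq_nonneg (h α 0 0 - h α 1 1), sq_nonneg (h α 2 2 - h α 3 3), sq_nonneg (h α 2 3)]
  have q3 : (h α 2 2 - h α 3 3) ^ 2 = 0 := by nlinarith [sq_nonneg (h α 0 1), sq_nonneg (h α 0 0 - h α 1 1), sq_nonneg (h α 2 3)]
  have q4 : h α 2 3 ^ 2 = 0 := by nlinarith [sq_nonneg (h α 0 1), sq_nonneg (h α 2 2 - h α 3 3), sq_nonneg (h α 0 0 - h α 1 1)]
  exact ⟨sub_eq_zero.mp (sq_eq_zero_iff.mp q1), sq_eq_zero_iff.mp q2,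
    sub_eq_zero.mp (sq_eq_zero_iff.mp q3), sq_eq_zero_iff.mp q4⟩

/-- The Ricci curvature at a point of a submanifold, expressed through the shape
operators `A_α` via the Gauss equation: for a unit vector `X`,
`Ric X = (n-1)c + Σ_α tr(A_α)⟨A_α X, X⟩ − Σ_α ‖A_α X‖²`. -/
noncomputable def RicCurv {V : Type*} [NormedAddCommGroup V] [InnerProductSpace ℝ V]
    (m n : ℕ) (c : ℝ) (A : Fin m → V →ₗ[ℝ] V) (X : V) : ℝ :=
  ((n : ℝ) - 1) * c + (∑ α : Fin m, LinearMap.trace ℝ V (A α) * ⟪(A α) X, X⟫)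
    - ∑ α : Fin m, ‖(A α) X‖ ^ 2

/-- The Lawson–Simons quantity `Θ_p` associated to an orthonormal basis
`e_1, …, e_n` and an integer `p`:
`Θ_p = Σ_{i≤p} Σ_{j>p} (2 Σ_α ⟨A_α e_i, e_j⟩² − Σ_α ⟨A_α e_i, e_i⟩⟨A_α e_j, e_j⟩)`. -/
noncomputable def Theta {V : Type*} [NormedAddCommGroup V] [InnerProductSpace ℝ V]
    (m : ℕ) {n : ℕ} (p : ℕ) (A : Fin m → V →ₗ[ℝ] V)
    (e : OrthonormalBasis (Fin n) ℝ V) : ℝ :=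
  ∑ i ∈ Finset.univ.filter (fun i : Fin n => (i : ℕ) < p),
    ∑ j ∈ Finset.univ.filter (fun j : Fin n => p ≤ (j : ℕ)),
      (2 * ∑ α : Fin m, ⟪(A α) (e i), e j⟫ ^ 2
        - ∑ α : Fin m, ⟪(A α) (e i), e i⟫ * ⟪(A α) (e j), e j⟫)

/-- The quantity `T_p = Σ_α (tr A_α) Σ_{i≤p} ⟨A_α e_i, e_i⟩`. -/
noncomputable def Tsum {V : Type*} [NormedAddCommGroup V] [InnerProductSpace ℝ V]
    (m : ℕ) {n : ℕ} (p : ℕ) (A : Fin m → V →ₗ[ℝ] V)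
    (e : OrthonormalBasis (Fin n) ℝ V) : ℝ :=
  ∑ α : Fin m, LinearMap.trace ℝ V (A α) *
    ∑ i ∈ Finset.univ.filter (fun i : Fin n => (i : ℕ) < p), ⟪(A α) (e i), e i⟫

/-- The squared length `S = Σ_α tr(A_α²)` of the second fundamental form. -/
noncomputable def Ssec {V : Type*} [NormedAddCommGroup V] [InnerProductSpace ℝ V]
    (m : ℕ) (A : Fin m → V →ₗ[ℝ] V) : ℝ :=
  ∑ α : Fin m, LinearMap.trace ℝ V (A α ∘ₗ A α)

theorem ricci_pinched_equality_dim_four {V : Type*} [NormedAddCommGroup V]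
    [InnerProductSpace ℝ V] [FiniteDimensional ℝ V] (m : ℕ)
    (hdim : Module.finrank ℝ V = 4)
    (A : Fin m → V →ₗ[ℝ] V) (hsymm : ∀ α : Fin m, (A α).IsSymmetric)
    (c H : ℝ) (hH : 0 ≤ H)
    (hHdef : (4 : ℝ) ^ 2 * H ^ 2 = ∑ α : Fin m, (LinearMap.trace ℝ V (A α)) ^ 2)
    (hRic : ∀ X : V, ‖X‖ = 1 → RicCurv m 4 c A X ≥ 2 * (c + H ^ 2))
    (e : OrthonormalBasis (Fin 4) ℝ V)
    (heq : Theta m 2 A e = 4 * c) :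
    ∀ α : Fin m,
      ⟪(A α) (e 0), e 0⟫ = ⟪(A α) (e 1), e 1⟫ ∧
      ⟪(A α) (e 0), e 1⟫ = 0 ∧
      ⟪(A α) (e 2), e 2⟫ = ⟪(A α) (e 3), e 3⟫ ∧
      ⟪(A α) (e 2), e 3⟫ = 0 := by
  set h : Fin m → Fin 4 → Fin 4 → ℝ := fun α i j => ⟪(A α) (e i), e j⟫ with hdefh
  have htr : ∀ α, LinearMap.trace ℝ V (A α) = h α 0 0 + h α 1 1 + h α 2 2 + h α 3 3 := fun α => by
    rw [trace_eq_sum' e, Fin.sum_univ_four]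
  have hs : ∀ α, h α 1 0 = h α 0 1 ∧ h α 2 0 = h α 0 2 ∧ h α 3 0 = h α 0 3 ∧
      h α 2 1 = h α 1 2 ∧ h α 3 1 = h α 1 3 ∧ h α 3 2 = h α 2 3 := fun α =>
    ⟨(hsymm α _ _).trans (real_inner_comm _ _), (hsymm α _ _).trans (real_inner_comm _ _),
     (hsymm α _ _).trans (real_inner_comm _ _), (hsymm α _ _).trans (real_inner_comm _ _),
     (hsymm α _ _).trans (real_inner_comm _ _), (hsymm α _ _).trans (real_inner_comm _ _)⟩
  have hH' : 16 * H ^ 2 = ∑ α, (h α 0 0 + h α 1 1 + h α 2 2 + h α 3 3) ^ 2 := by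
    calc 16 * H ^ 2 = (4:ℝ) ^ 2 * H ^ 2 := by norm_num
      _ = ∑ α, (LinearMap.trace ℝ V (A α)) ^ 2 := hHdef
      _ = _ := Finset.sum_congr rfl fun α _ => by rw [htr α]
  have hR' : ∀ i : Fin 4,
      3 * c + ((∑ α, (h α 0 0 + h α 1 1 + h α 2 2 + h α 3 3) * h α i i)
        - ∑ α, (h α i 0 ^ 2 + h α i 1 ^ 2 + h α i 2 ^ 2 + h α i 3 ^ 2)) ≥ 2 * (c + H ^ 2) := by
    intro i
    have h1 := hRic (e i) (e.orthonormal.1 i)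
    unfold RicCurv at h1
    have e2 : ∑ α, LinearMap.trace ℝ V (A α) * ⟪(A α) (e i), e i⟫
        = ∑ α, (h α 0 0 + h α 1 1 + h α 2 2 + h α 3 3) * h α i i :=
      Finset.sum_congr rfl fun α _ => by rw [htr α]
    have e3 : ∑ α, ‖(A α) (e i)‖ ^ 2
        = ∑ α, (h α i 0 ^ 2 + h α i 1 ^ 2 + h α i 2 ^ 2 + h α i 3 ^ 2) :=
      Finset.sum_congr rfl fun α _ => by rw [norm_sq_eq_sum' e, Fin.sum_univ_four]
    rw [e2, e3] at h1
    push_cast at h1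
    linarith
  have hT' : ((2 * ∑ α, h α 0 2 ^ 2 - ∑ α, h α 0 0 * h α 2 2)
        + (2 * ∑ α, h α 0 3 ^ 2 - ∑ α, h α 0 0 * h α 3 3))
        + ((2 * ∑ α, h α 1 2 ^ 2 - ∑ α, h α 1 1 * h α 2 2)
        + (2 * ∑ α, h α 1 3 ^ 2 - ∑ α, h α 1 1 * h α 3 3)) = 4 * c := by
    unfold Theta at heq
    rw [show Finset.univ.filter (fun i : Fin 4 => (i : ℕ) < 2) = {0, 1} from by decide,
        show Finset.univ.filter (fun j : Fin 4 => 2 ≤ (j : ℕ)) = {2, 3} from by decide] at heq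
    rw [Finset.sum_pair (show (0 : Fin 4) ≠ 1 by decide)] at heq
    simp only [Finset.sum_pair (show (2 : Fin 4) ≠ 3 by decide)] at heq
    exact heq
  exact alg_main h c H hs hH' hR' hT'
end

section
/- Let V, A_1,…,A_m, c, n, H, Ric, Θ_p, T_p be as in the setting. Then for every integer p with 2 ≤ p ≤ n−1 and every orthonormal basis e_1,…,e_n of V one has Θ_p ≤ p·Σ_{i=1}^p((n−1)(c+H²) − Ric(e_i)) − p(n−p)H² + (p−1)(T_p − p n H²). (The first estimate (5) in the proof of Proposition 2; note that n H Σ_{i=1}^p ⟨(A_1 − H·Id)e_i, e_i⟩ = T_p − p n H² when the normal frame is chosen with ξ_1 along the mean curvature vector.) -/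
open scoped RealInnerProductSpace

theorem theta_first_estimate {V : Type*} [NormedAddCommGroup V] [InnerProductSpace ℝ V]
    [FiniteDimensional ℝ V] (n m : ℕ)
    (hdim : Module.finrank ℝ V = n)
    (A : Fin m → V →ₗ[ℝ] V) (hsymm : ∀ α : Fin m, (A α).IsSymmetric)
    (c H : ℝ) (hH : 0 ≤ H)
    (hHdef : (n : ℝ) ^ 2 * H ^ 2 = ∑ α : Fin m, (LinearMap.trace ℝ V (A α)) ^ 2) :
    ∀ p : ℕ, 2 ≤ p → p ≤ n - 1 → ∀ e : OrthonormalBasis (Fin n) ℝ V,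
      Theta m p A e ≤
        (p : ℝ) * (∑ i ∈ Finset.univ.filter (fun i : Fin n => (i : ℕ) < p),
            (((n : ℝ) - 1) * (c + H ^ 2) - RicCurv m n c A (e i)))
          - (p : ℝ) * ((n : ℝ) - p) * H ^ 2
          + ((p : ℝ) - 1) * (Tsum m p A e - (p : ℝ) * (n : ℝ) * H ^ 2) := by
  intro p hp2 hp1 e
  simp only [Theta, RicCurv, Tsum]
  have hpn : p < n := by omega
  set P := Finset.univ.filter (fun i : Fin n => (i : ℕ) < p) with hP
  set Q := Finset.univ.filter (fun j : Fin n => p ≤ (j : ℕ)) with hQ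
  set a : Fin m → Fin n → Fin n → ℝ := fun α i j => ⟪(A α) (e i), e j⟫ with ha
  have haa : ∀ α i j, ⟪(A α) (e i), e j⟫ = a α i j := fun _ _ _ => rfl
  have htr : ∀ α, LinearMap.trace ℝ V (A α) = ∑ k, a α k k := by
    intro α
    rw [LinearMap.trace_eq_matrix_trace ℝ e.toBasis, Matrix.trace]
    refine Finset.sum_congr rfl fun k _ => ?_
    rw [Matrix.diag_apply, LinearMap.toMatrix_apply]
    simp only [OrthonormalBasis.coe_toBasis, OrthonormalBasis.coe_toBasis_repr_apply,
      OrthonormalBasis.repr_apply_apply]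
    rw [real_inner_comm, haa]
  have hns : ∀ α i, ‖(A α) (e i)‖ ^ 2 = ∑ j, a α i j ^ 2 := by
    intro α i
    rw [← real_inner_self_eq_norm_sq, ← OrthonormalBasis.sum_inner_mul_inner e]
    refine Finset.sum_congr rfl fun j _ => ?_
    rw [real_inner_comm ((A α) (e i)) (e j), haa]; ring
  have hsplit : ∀ f : Fin n → ℝ, ∑ k, f k = ∑ i ∈ P, f i + ∑ j ∈ Q, f j := by
    intro f
    rw [← Finset.sum_filter_add_sum_filter_not Finset.univ (fun i : Fin n => (i : ℕ) < p) f]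
    congr 1
    · rw [hQ]
      refine Finset.sum_congr ?_ fun _ _ => rfl
      ext i; simp [not_lt]
  have hcardP : (P.card : ℝ) = p := by
    have h : P = Finset.Iio (⟨p, hpn⟩ : Fin n) := by
      ext i
      simp [hP, Fin.lt_def]
    rw [h, Fin.card_Iio]
  -- rewrite RHS
  have hR : (p : ℝ) * (∑ i ∈ P,
            (((n : ℝ) - 1) * (c + H ^ 2) -
              (((n : ℝ) - 1) * c + (∑ α : Fin m, LinearMap.trace ℝ V (A α) * ⟪(A α) (e i), e i⟫)
                - ∑ α : Fin m, ‖(A α) (e i)‖ ^ 2)))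
          - (p : ℝ) * ((n : ℝ) - p) * H ^ 2
          + ((p : ℝ) - 1) * ((∑ α : Fin m, LinearMap.trace ℝ V (A α) * ∑ i ∈ P, ⟪(A α) (e i), e i⟫)
            - (p : ℝ) * (n : ℝ) * H ^ 2)
      = ∑ α : Fin m, ((p : ℝ) * ∑ i ∈ P, ∑ j, a α i j ^ 2
          - (∑ k, a α k k) * ∑ i ∈ P, a α i i) := by
    simp only [htr, hns, haa]
    have h1 : ∀ i : Fin n, ((n : ℝ) - 1) * (c + H ^ 2) -
        (((n : ℝ) - 1) * c + (∑ α : Fin m, (∑ k, a α k k) * a α i i)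
          - ∑ α : Fin m, ∑ j, a α i j ^ 2)
        = ((n : ℝ) - 1) * H ^ 2 - (∑ α : Fin m, (∑ k, a α k k) * a α i i)
          + ∑ α : Fin m, ∑ j, a α i j ^ 2 := fun i => by ring
    simp only [h1]
    rw [Finset.sum_add_distrib, Finset.sum_sub_distrib, Finset.sum_const, nsmul_eq_mul]
    have h2 : ∑ i ∈ P, ∑ α : Fin m, (∑ k, a α k k) * a α i i
        = ∑ α : Fin m, (∑ k, a α k k) * ∑ i ∈ P, a α i i := by
      rw [Finset.sum_comm]
      exact Finset.sum_congr rfl fun α _ => (Finset.mul_sum _ _ _).symm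
    have h3 : ∑ i ∈ P, ∑ α : Fin m, ∑ j, a α i j ^ 2
        = ∑ α : Fin m, ∑ i ∈ P, ∑ j, a α i j ^ 2 := Finset.sum_comm
    rw [h2, h3, hcardP, Finset.sum_sub_distrib, ← Finset.mul_sum]
    ring
  rw [hR]
  -- rewrite LHS
  have hL : (∑ i ∈ P, ∑ j ∈ Q,
      (2 * ∑ α : Fin m, ⟪(A α) (e i), e j⟫ ^ 2
        - ∑ α : Fin m, ⟪(A α) (e i), e i⟫ * ⟪(A α) (e j), e j⟫))
      = ∑ α : Fin m, (2 * (∑ i ∈ P, ∑ j ∈ Q, a α i j ^ 2)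
          - (∑ i ∈ P, a α i i) * (∑ j ∈ Q, a α j j)) := by
    simp only [haa]
    have swap3 : ∀ g : Fin m → Fin n → Fin n → ℝ,
        ∑ i ∈ P, ∑ j ∈ Q, ∑ α : Fin m, g α i j = ∑ α : Fin m, ∑ i ∈ P, ∑ j ∈ Q, g α i j := by
      intro g
      calc ∑ i ∈ P, ∑ j ∈ Q, ∑ α : Fin m, g α i j
          = ∑ i ∈ P, ∑ α : Fin m, ∑ j ∈ Q, g α i j :=
            Finset.sum_congr rfl fun i _ => Finset.sum_comm
        _ = ∑ α : Fin m, ∑ i ∈ P, ∑ j ∈ Q, g α i j := Finset.sum_comm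
    calc ∑ i ∈ P, ∑ j ∈ Q, (2 * ∑ α : Fin m, a α i j ^ 2 - ∑ α : Fin m, a α i i * a α j j)
        = ∑ i ∈ P, ∑ j ∈ Q, ∑ α : Fin m, (2 * a α i j ^ 2 - a α i i * a α j j) := by
          refine Finset.sum_congr rfl fun i _ => Finset.sum_congr rfl fun j _ => ?_
          rw [Finset.sum_sub_distrib, Finset.mul_sum]
      _ = ∑ α : Fin m, ∑ i ∈ P, ∑ j ∈ Q, (2 * a α i j ^ 2 - a α i i * a α j j) := swap3 _
      _ = ∑ α : Fin m, (2 * (∑ i ∈ P, ∑ j ∈ Q, a α i j ^ 2)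
          - (∑ i ∈ P, a α i i) * (∑ j ∈ Q, a α j j)) := by
          refine Finset.sum_congr rfl fun α _ => ?_
          rw [Finset.sum_mul_sum, Finset.mul_sum, ← Finset.sum_sub_distrib]
          refine Finset.sum_congr rfl fun i _ => ?_
          rw [Finset.mul_sum, ← Finset.sum_sub_distrib]
  rw [hL]
  refine Finset.sum_le_sum fun α _ => ?_
  have hkey : (∑ k, a α k k) = ∑ i ∈ P, a α i i + ∑ j ∈ Q, a α j j := hsplit _
  have hB : (0:ℝ) ≤ ∑ i ∈ P, ∑ j ∈ Q, a α i j ^ 2 := by positivity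
  have hCS : (∑ i ∈ P, a α i i) ^ 2 ≤ (p : ℝ) * ∑ i ∈ P, (a α i i) ^ 2 := by
    have h := sq_sum_le_card_mul_sum_sq (s := P) (f := fun i => a α i i)
    rwa [hcardP] at h
  have hdiag : ∑ i ∈ P, (a α i i) ^ 2 ≤ ∑ i ∈ P, ∑ j ∈ P, a α i j ^ 2 :=
    Finset.sum_le_sum fun i hi => Finset.single_le_sum (f := fun j => a α i j ^ 2) (fun j _ => sq_nonneg _) hi
  have hU : ∑ i ∈ P, ∑ j, a α i j ^ 2
      = ∑ i ∈ P, ∑ j ∈ P, a α i j ^ 2 + ∑ i ∈ P, ∑ j ∈ Q, a α i j ^ 2 := by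
    rw [← Finset.sum_add_distrib]
    exact Finset.sum_congr rfl fun i _ => hsplit _
  have hp2' : (2 : ℝ) ≤ p := by exact_mod_cast hp2
  have hDD : (p : ℝ) * ∑ i ∈ P, (a α i i) ^ 2 ≤ (p : ℝ) * ∑ i ∈ P, ∑ j ∈ P, a α i j ^ 2 :=
    mul_le_mul_of_nonneg_left hdiag (by positivity)
  rw [hU, hkey]
  nlinarith [hCS.trans hDD, mul_nonneg (sub_nonneg.mpr hp2') hB]
end

section
/- Let V, A_1,…,A_m, c, n, H, Ric be as in the setting, with n ≥ 4. Assume Ric(X) ≥ (n(n−1)/(n+2))(c+H²) for every unit vector X ∈ V. Then for every orthonormal basis e_1,…,e_n of V, Σ_{j=2}^n (2·Σ_{α=1}^m ⟨A_α e_1, e_j⟩² − Σ_{α=1}^m ⟨A_α e_1, e_1⟩⟨A_α e_j, e_j⟩) ≤ (n−1)c. (Pointwise estimate in the proof of Lemma 3, verifying the Lawson–Simons condition for p = 1.) -/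
open scoped RealInnerProductSpace

set_option maxHeartbeats 1000000 in
theorem lemma_three_estimate {V : Type*} [NormedAddCommGroup V] [InnerProductSpace ℝ V]
    [FiniteDimensional ℝ V] (n m : ℕ)
    (hdim : Module.finrank ℝ V = n)
    (A : Fin m → V →ₗ[ℝ] V) (hsymm : ∀ α : Fin m, (A α).IsSymmetric)
    (c H : ℝ) (hH : 0 ≤ H)
    (hHdef : (n : ℝ) ^ 2 * H ^ 2 = ∑ α : Fin m, (LinearMap.trace ℝ V (A α)) ^ 2)
    (hn : 4 ≤ n)
    (hRic : ∀ X : V, ‖X‖ = 1 →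
      RicCurv m n c A X ≥ (n : ℝ) * ((n : ℝ) - 1) / ((n : ℝ) + 2) * (c + H ^ 2)) :
    ∀ e : OrthonormalBasis (Fin n) ℝ V,
      ∑ j ∈ Finset.univ.filter (fun j : Fin n => 1 ≤ (j : ℕ)),
        (2 * ∑ α : Fin m, ⟪(A α) (e ⟨0, by omega⟩), e j⟫ ^ 2
          - ∑ α : Fin m, ⟪(A α) (e ⟨0, by omega⟩), e ⟨0, by omega⟩⟫ * ⟪(A α) (e j), e j⟫)
      ≤ ((n : ℝ) - 1) * c := by
  intro e
  have hn0 : 0 < n := by omega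
  set i0 : Fin n := ⟨0, by omega⟩ with hi0def
  set S1 : Finset (Fin n) := Finset.univ.filter (fun j : Fin n => 1 ≤ (j : ℕ)) with hS1def
  set N : ℝ := (n : ℝ) with hNdef
  have hN4 : (4 : ℝ) ≤ N := by rw [hNdef]; exact_mod_cast hn
  have hnorm : ∀ i : Fin n, ‖e i‖ = 1 := fun i => e.orthonormal.1 i
  have hsym : ∀ (α : Fin m) (i j : Fin n), ⟪(A α) (e i), e j⟫ = ⟪(A α) (e j), e i⟫ := by
    intro α i j
    rw [hsymm α (e i) (e j), real_inner_comm]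
  have htr : ∀ α : Fin m, LinearMap.trace ℝ V (A α) = ∑ i : Fin n, ⟪(A α) (e i), e i⟫ := by
    intro α
    rw [LinearMap.trace_eq_matrix_trace ℝ e.toBasis, Matrix.trace]
    refine Finset.sum_congr rfl fun i _ => ?_
    rw [Matrix.diag_apply, LinearMap.toMatrix_apply, e.coe_toBasis_repr_apply,
      e.repr_apply_apply, e.coe_toBasis, real_inner_comm]
  have hpar : ∀ x : V, ‖x‖ ^ 2 = ∑ j : Fin n, ⟪x, e j⟫ ^ 2 := by
    intro x
    rw [← real_inner_self_eq_norm_sq, ← e.sum_inner_mul_inner x x]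
    refine Finset.sum_congr rfl fun j _ => ?_
    rw [real_inner_comm (e j) x]; ring
  have hv : (i0 : ℕ) = 0 := rfl
  have hfilt : Finset.univ.filter (fun j : Fin n => ¬ 1 ≤ (j : ℕ)) = {i0} := by
    ext j
    simp only [Finset.mem_filter, Finset.mem_univ, true_and, Finset.mem_singleton,
      Fin.ext_iff, hv]
    omega
  have hsplit : ∀ f : Fin n → ℝ, ∑ i : Fin n, f i = f i0 + ∑ i ∈ S1, f i := by
    intro f
    rw [← Finset.sum_filter_add_sum_filter_not Finset.univ (fun j : Fin n => 1 ≤ (j : ℕ)) f,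
      hfilt, Finset.sum_singleton, hS1def, add_comm]
  have hcard : (S1.card : ℝ) = N - 1 := by
    have h1 := Finset.card_filter_add_card_filter_not (s := Finset.univ)
      (p := fun j : Fin n => 1 ≤ (j : ℕ))
    rw [hfilt, ← hS1def] at h1
    simp only [Finset.card_singleton, Finset.card_univ, Fintype.card_fin] at h1
    have h2 : S1.card = n - 1 := by omega
    rw [h2, hNdef, Nat.cast_sub hn0, Nat.cast_one]
  set τ : Fin m → ℝ := fun α => ∑ i : Fin n, ⟪(A α) (e i), e i⟫ with hτdef
  set s : Fin m → ℝ := fun α => ∑ i ∈ S1, ⟪(A α) (e i), e i⟫ with hsdef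
  have hτα : ∀ α, τ α = ∑ i : Fin n, ⟪(A α) (e i), e i⟫ := fun _ => rfl
  have hsα : ∀ α, s α = ∑ i ∈ S1, ⟪(A α) (e i), e i⟫ := fun _ => rfl
  have hd : ∀ α, ⟪(A α) (e i0), e i0⟫ = τ α - s α := by
    intro α
    have h := hsplit (fun i => ⟪(A α) (e i), e i⟫)
    beta_reduce at h
    rw [hτα, hsα]
    linarith [h]
  set b : ℝ := ∑ α : Fin m, ∑ j ∈ S1, ⟪(A α) (e i0), e j⟫ ^ 2 with hbdef
  set D : ℝ := ∑ α : Fin m, ∑ i ∈ S1, ⟪(A α) (e i), e i⟫ ^ 2 with hDdef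
  set P1 : ℝ := ∑ α : Fin m, τ α * s α with hP1def
  set P2 : ℝ := ∑ α : Fin m, (s α) ^ 2 with hP2def
  set P3 : ℝ := ∑ α : Fin m, (τ α) ^ 2 with hP3def
  set K : ℝ := N * (N - 1) * H ^ 2 - 2 * (N - 1) * c with hKdef
  have hNpos : (0 : ℝ) < N + 2 := by linarith
  -- Ricci gap at each basis vector
  have hgap : ∀ i : Fin n,
      K ≤ (N + 2) * ((∑ α : Fin m, τ α * ⟪(A α) (e i), e i⟫)
        - ∑ α : Fin m, ∑ j : Fin n, ⟪(A α) (e i), e j⟫ ^ 2) := by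
    intro i
    have h0 := hRic (e i) (hnorm i)
    simp only [RicCurv] at h0
    have e2 : ∑ α : Fin m, LinearMap.trace ℝ V (A α) * ⟪(A α) (e i), e i⟫
        = ∑ α : Fin m, τ α * ⟪(A α) (e i), e i⟫ :=
      Finset.sum_congr rfl fun α _ => by rw [htr, hτα]
    have e3 : ∑ α : Fin m, ‖(A α) (e i)‖ ^ 2
        = ∑ α : Fin m, ∑ j : Fin n, ⟪(A α) (e i), e j⟫ ^ 2 :=
      Finset.sum_congr rfl fun α _ => hpar _
    rw [e2, e3] at h0
    have h1 : (∑ α : Fin m, τ α * ⟪(A α) (e i), e i⟫)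
        - ∑ α : Fin m, ∑ j : Fin n, ⟪(A α) (e i), e j⟫ ^ 2
        ≥ N * (N - 1) / (N + 2) * (c + H ^ 2) - (N - 1) * c := by linarith [h0]
    have hKeq : (N + 2) * (N * (N - 1) / (N + 2) * (c + H ^ 2) - (N - 1) * c) = K := by
      rw [hKdef]
      field_simp
      ring
    calc K = (N + 2) * (N * (N - 1) / (N + 2) * (c + H ^ 2) - (N - 1) * c) := hKeq.symm
      _ ≤ (N + 2) * ((∑ α : Fin m, τ α * ⟪(A α) (e i), e i⟫)
          - ∑ α : Fin m, ∑ j : Fin n, ⟪(A α) (e i), e j⟫ ^ 2) :=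
        mul_le_mul_of_nonneg_left h1 (le_of_lt hNpos)
  -- Inequality (1): at i0
  have h1 : K ≤ (N + 2) * (P1 - P2 - b) := by
    have e1 : (∑ α : Fin m, τ α * ⟪(A α) (e i0), e i0⟫)
        - ∑ α : Fin m, ∑ j : Fin n, ⟪(A α) (e i0), e j⟫ ^ 2 = P1 - P2 - b := by
      rw [hP1def, hP2def, hbdef, ← Finset.sum_sub_distrib, ← Finset.sum_sub_distrib,
        ← Finset.sum_sub_distrib]
      refine Finset.sum_congr rfl fun α _ => ?_
      have h := hsplit (fun j => ⟪(A α) (e i0), e j⟫ ^ 2)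
      beta_reduce at h
      rw [h, hd]
      ring
    rw [← e1]
    exact hgap i0
  -- Inequality (2): summed over S1
  have h2 : (N - 1) * K ≤ (N + 2) * (P1 - b - D) := by
    have hgap2 : ∀ i ∈ S1, K ≤ (N + 2) * ((∑ α : Fin m, τ α * ⟪(A α) (e i), e i⟫)
        - ∑ α : Fin m, (⟪(A α) (e i0), e i⟫ ^ 2 + ⟪(A α) (e i), e i⟫ ^ 2)) := by
      intro i hi
      have hne : i0 ≠ i := by
        simp only [hS1def, Finset.mem_filter, Finset.mem_univ, true_and] at hi
        intro h
        rw [← h] at hi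
        rw [hv] at hi
        omega
      refine le_trans (hgap i) (mul_le_mul_of_nonneg_left ?_ (le_of_lt hNpos))
      have hsub : ∀ α : Fin m, ⟪(A α) (e i0), e i⟫ ^ 2 + ⟪(A α) (e i), e i⟫ ^ 2
          ≤ ∑ j : Fin n, ⟪(A α) (e i), e j⟫ ^ 2 := by
        intro α
        have hss := Finset.sum_le_sum_of_subset_of_nonneg
          (Finset.subset_univ ({i0, i} : Finset (Fin n)))
          (fun j _ _ => sq_nonneg (⟪(A α) (e i), e j⟫))
        rw [Finset.sum_pair hne] at hss
        calc ⟪(A α) (e i0), e i⟫ ^ 2 + ⟪(A α) (e i), e i⟫ ^ 2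
            = ⟪(A α) (e i), e i0⟫ ^ 2 + ⟪(A α) (e i), e i⟫ ^ 2 := by rw [hsym α i0 i]
          _ ≤ ∑ j : Fin n, ⟪(A α) (e i), e j⟫ ^ 2 := hss
      have hs2 := Finset.sum_le_sum (fun α (_ : α ∈ (Finset.univ : Finset (Fin m))) => hsub α)
      linarith [hs2]
    have hsumgap := Finset.sum_le_sum hgap2
    rw [Finset.sum_const, nsmul_eq_mul, hcard] at hsumgap
    have eX : ∑ i ∈ S1, ∑ α : Fin m, τ α * ⟪(A α) (e i), e i⟫ = P1 := by
      rw [Finset.sum_comm, hP1def]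
      refine Finset.sum_congr rfl fun α _ => ?_
      rw [← Finset.mul_sum, ← hsα]
    have eY : ∑ i ∈ S1, ∑ α : Fin m, (⟪(A α) (e i0), e i⟫ ^ 2 + ⟪(A α) (e i), e i⟫ ^ 2)
        = b + D := by
      rw [Finset.sum_comm, hbdef, hDdef, ← Finset.sum_add_distrib]
      exact Finset.sum_congr rfl fun α _ => Finset.sum_add_distrib
    have eZ : ∑ i ∈ S1, (N + 2) * ((∑ α : Fin m, τ α * ⟪(A α) (e i), e i⟫)
        - ∑ α : Fin m, (⟪(A α) (e i0), e i⟫ ^ 2 + ⟪(A α) (e i), e i⟫ ^ 2))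
        = (N + 2) * (P1 - b - D) := by
      rw [← Finset.mul_sum, Finset.sum_sub_distrib, eX, eY]
      ring
    linarith [hsumgap, le_of_eq eZ]
  -- Cauchy-Schwarz: P2 ≤ (N-1) * D
  have hF2 : P2 ≤ (N - 1) * D := by
    rw [hP2def, hDdef, Finset.mul_sum]
    refine Finset.sum_le_sum fun α _ => ?_
    have h' := sq_sum_le_card_mul_sum_sq (s := S1) (f := fun i => ⟪(A α) (e i), e i⟫)
    beta_reduce at h'
    rw [hcard] at h'
    rw [hsα]
    exact h'
  -- sum of squares
  have h3 : 0 ≤ (N - 1) ^ 2 * P3 + N ^ 2 * P2 - 2 * N * (N - 1) * P1 := by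
    have e4 : (N - 1) ^ 2 * P3 + N ^ 2 * P2 - 2 * N * (N - 1) * P1
        = ∑ α : Fin m, ((N - 1) * τ α - N * s α) ^ 2 := by
      rw [hP1def, hP2def, hP3def, Finset.mul_sum, Finset.mul_sum, Finset.mul_sum,
        ← Finset.sum_add_distrib, ← Finset.sum_sub_distrib]
      exact Finset.sum_congr rfl fun α _ => by ring
    rw [e4]
    exact Finset.sum_nonneg fun α _ => sq_nonneg _
  -- P3 = n² H²
  have hP3 : P3 = N ^ 2 * H ^ 2 := by
    rw [hP3def, hHdef]
    exact Finset.sum_congr rfl fun α _ => by rw [htr, hτα]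
  have hE : N * K - (N - 1) * P3 + 2 * N * (N - 1) * c = 0 := by
    rw [hKdef, hP3]
    ring
  -- rewrite the goal
  have htarget : ∑ j ∈ S1, (2 * ∑ α : Fin m, ⟪(A α) (e i0), e j⟫ ^ 2
      - ∑ α : Fin m, ⟪(A α) (e i0), e i0⟫ * ⟪(A α) (e j), e j⟫)
      = 2 * b - (P1 - P2) := by
    rw [Finset.sum_sub_distrib]
    have eA : ∑ j ∈ S1, 2 * ∑ α : Fin m, ⟪(A α) (e i0), e j⟫ ^ 2 = 2 * b := by
      rw [← Finset.mul_sum, hbdef, Finset.sum_comm]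
    have eB : ∑ j ∈ S1, ∑ α : Fin m, ⟪(A α) (e i0), e i0⟫ * ⟪(A α) (e j), e j⟫
        = P1 - P2 := by
      rw [Finset.sum_comm, hP1def, hP2def, ← Finset.sum_sub_distrib]
      refine Finset.sum_congr rfl fun α _ => ?_
      rw [← Finset.mul_sum, hd α, ← hsα α]
      ring
    rw [eA, eB]
  show ∑ j ∈ S1, (2 * ∑ α : Fin m, ⟪(A α) (e i0), e j⟫ ^ 2
      - ∑ α : Fin m, ⟪(A α) (e i0), e i0⟫ * ⟪(A α) (e j), e j⟫) ≤ (N - 1) * c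
  rw [htarget]
  -- final linear combination
  have c1 : 0 ≤ (N + 2) * (P1 - P2 - b) - K := by linarith
  have c2 : 0 ≤ (N + 2) * (P1 - b - D) - (N - 1) * K := by linarith
  have c3 : 0 ≤ (N - 1) * D - P2 := by linarith
  have hNn : (0:ℝ) ≤ N := by linarith
  have hN1 : (0:ℝ) ≤ N - 1 := by linarith
  have hN2 : (0:ℝ) ≤ N + 2 := by linarith
  have m1 : (0:ℝ) ≤ 6 * N * (N - 1) := by
    have := mul_nonneg (mul_nonneg (by norm_num : (0:ℝ) ≤ 6) hNn) hN1
    linarith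
  have m2 : (0:ℝ) ≤ 2 * N * (N - 1) := by
    have := mul_nonneg (mul_nonneg (by norm_num : (0:ℝ) ≤ 2) hNn) hN1
    linarith
  have m3 : (0:ℝ) ≤ 2 * N * (N + 2) := by
    have := mul_nonneg (mul_nonneg (by norm_num : (0:ℝ) ≤ 2) hNn) hN2
    linarith
  have m4 : (0:ℝ) ≤ 2 * (N + 2) := by linarith
  have key : 4 * N * (N - 1) * (N + 2) * ((N - 1) * c - (2 * b - (P1 - P2)))
      = 6 * N * (N - 1) * ((N + 2) * (P1 - P2 - b) - K)
        + 2 * N * (N - 1) * ((N + 2) * (P1 - b - D) - (N - 1) * K)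
        + 2 * N * (N + 2) * ((N - 1) * D - P2)
        + 2 * (N + 2) * ((N - 1) ^ 2 * P3 + N ^ 2 * P2 - 2 * N * (N - 1) * P1)
        + 2 * (N - 1) * (N + 2) * (N * K - (N - 1) * P3 + 2 * N * (N - 1) * c) := by
    ring
  have hGE : 0 ≤ 4 * N * (N - 1) * (N + 2) * ((N - 1) * c - (2 * b - (P1 - P2))) := by
    rw [key, hE]
    have t1 := mul_nonneg m1 c1
    have t2 := mul_nonneg m2 c2
    have t3 := mul_nonneg m3 c3
    have t4 := mul_nonneg m4 h3
    linarith
  by_contra hcon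
  push_neg at hcon
  have hX : 0 < (2 * b - (P1 - P2)) - (N - 1) * c := by linarith
  have hposK : (0:ℝ) < 4 * N * (N - 1) * (N + 2) := by
    have h4 : (0:ℝ) < 4 * N := by linarith
    have h5 : (0:ℝ) < N - 1 := by linarith
    have h6 : (0:ℝ) < N + 2 := by linarith
    exact mul_pos (mul_pos h4 h5) h6
  nlinarith [mul_pos hposK hX, hGE]
end
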